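/- arXiv:2309.00539 — 2 statements merged into one kernel-verified Lean document; each statement's English description precedes it below -/
import Mathlib

section
/- The integral ∫_0^1 [ln t − ln(1−t)]² · ln(1−t)/t dt equals −7·ζ(4) = −7π⁴/90. -/
open Real MeasureTheory Set

lemma exp_neg_image : (fun s : ℝ => Real.exp (-s)) '' Set.Ioi 0 = Set.Ioo (0:ℝ) 1 := by
  ext x
  constructor
  · rintro ⟨s, hs, rfl⟩
    refine ⟨Real.exp_pos _, Real.exp_lt_one_iff.mpr (by simpa using hs)⟩
  · rintro ⟨hx0, hx1⟩
    exact ⟨-Real.log x, by simpa using Real.log_neg hx0 hx1, by simp [Real.exp_log hx0]⟩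

lemma exp_neg_deriv (s : ℝ) : HasDerivAt (fun s : ℝ => Real.exp (-s)) (-Real.exp (-s)) s := by
  have := (Real.hasDerivAt_exp (-s)).comp s (hasDerivAt_neg s)
  simp at this
  exact this

lemma exp_neg_inj : Set.InjOn (fun s : ℝ => Real.exp (-s)) (Set.Ioi 0) :=
  fun a _ b _ h => by
    have := Real.exp_injective h
    linarith [neg_injective this]

lemma integrableOn_pow_exp (n m : ℕ) :
    IntegrableOn (fun s : ℝ => s ^ m * Real.exp (-(((n:ℝ)+1) * s))) (Set.Ioi 0) := by
  have h := integrableOn_rpow_mul_exp_neg_mul_rpow (p := 1) (s := (m:ℝ)) (b := (n:ℝ)+1)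
    (lt_of_lt_of_le (by norm_num) (Nat.cast_nonneg m)) one_pos (by positivity)
  refine (h.congr_fun (fun x hx => ?_) measurableSet_Ioi)
  beta_reduce
  rw [Real.rpow_one, Real.rpow_natCast, neg_mul]

lemma integral_pow_exp (n m : ℕ) :
    ∫ s in Set.Ioi (0:ℝ), s ^ m * Real.exp (-(((n:ℝ)+1) * s))
      = (Nat.factorial m) / ((n:ℝ)+1) ^ (m+1) := by
  have h := Real.integral_rpow_mul_exp_neg_mul_Ioi (a := (m:ℝ)+1) (r := (n:ℝ)+1)
    (by positivity) (by positivity)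
  rw [show ((m:ℝ)+1-1) = (m:ℝ) by ring, Real.Gamma_nat_eq_factorial,
    show ((m:ℝ)+1) = ((m+1:ℕ):ℝ) by push_cast; ring, Real.rpow_natCast] at h
  calc ∫ s in Set.Ioi (0:ℝ), s ^ m * Real.exp (-(((n:ℝ)+1) * s))
      = ∫ s in Set.Ioi (0:ℝ), s ^ (m:ℝ) * Real.exp (-(((n:ℝ)+1) * s)) :=
        (setIntegral_congr_fun measurableSet_Ioi (fun x _ => by rw [Real.rpow_natCast])).symm
    _ = (1/((n:ℝ)+1)) ^ (m+1) * (Nat.factorial m) := h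
    _ = (Nat.factorial m) / ((n:ℝ)+1) ^ (m+1) := by
        rw [div_pow, one_pow]; ring

lemma smul_transform (n m : ℕ) (s : ℝ) :
    |(-Real.exp (-s))| • ((Real.exp (-s)) ^ n * (Real.log (Real.exp (-s))) ^ m)
      = (-1:ℝ) ^ m * (s ^ m * Real.exp (-(((n:ℝ)+1) * s))) := by
  rw [abs_neg, abs_of_pos (Real.exp_pos _), smul_eq_mul, Real.log_exp, ← Real.exp_nat_mul]
  rw [← mul_assoc, ← Real.exp_add, neg_pow]
  rw [show -s + (n:ℝ) * -s = -(((n:ℝ)+1) * s) by ring]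
  ring

lemma integrableOn_pow_mul_log_pow (n m : ℕ) :
    IntegrableOn (fun x : ℝ => x ^ n * Real.log x ^ m) (Set.Ioo (0:ℝ) 1) := by
  rw [← exp_neg_image, integrableOn_image_iff_integrableOn_abs_deriv_smul measurableSet_Ioi
    (fun s _ => (exp_neg_deriv s).hasDerivWithinAt) exp_neg_inj]
  have h2 : IntegrableOn (fun s : ℝ => (-1:ℝ)^m * (s ^ m * Real.exp (-(((n:ℝ)+1) * s)))) (Set.Ioi 0) :=
    (integrableOn_pow_exp n m).const_mul ((-1:ℝ)^m)
  exact h2.congr_fun (fun s _ => (smul_transform n m s).symm) measurableSet_Ioi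

lemma integral_pow_mul_log_pow (n m : ℕ) :
    ∫ x in Set.Ioo (0:ℝ) 1, x ^ n * Real.log x ^ m
      = (-1:ℝ) ^ m * (Nat.factorial m) / ((n:ℝ)+1) ^ (m+1) := by
  rw [← exp_neg_image, integral_image_eq_integral_abs_deriv_smul measurableSet_Ioi
    (fun s _ => (exp_neg_deriv s).hasDerivWithinAt) exp_neg_inj]
  rw [setIntegral_congr_fun measurableSet_Ioi (fun s _ => smul_transform n m s),
    integral_const_mul, integral_pow_exp]
  ring

noncomputable def hh (u : ℝ) : ℝ := -(Real.log u ^ 2 * Real.log (1+u) / (u * (1+u)))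

noncomputable def kk (v : ℝ) : ℝ := (Real.log v ^ 3 - Real.log v ^ 2 * Real.log (1+v)) / (1+v)

noncomputable def ff (n : ℕ) (v : ℝ) : ℝ :=
  (-1:ℝ)^n * (v^n * Real.log v ^ 3) - ((-1:ℝ)^n * (v^n * Real.log v ^ 2))/((n:ℝ)+1)

noncomputable def bb (n : ℕ) (v : ℝ) : ℝ :=
  (v^n * Real.log v ^ 2)/((n:ℝ)+1) - v^n * Real.log v ^ 3

lemma ratio_image : (fun u : ℝ => u/(1+u)) '' Set.Ioi 0 = Set.Ioo (0:ℝ) 1 := by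
  ext t
  constructor
  · rintro ⟨u, hu, rfl⟩
    simp only [Set.mem_Ioi] at hu
    have h1 : (0:ℝ) < 1 + u := by linarith
    constructor
    · positivity
    · rw [div_lt_one h1]; linarith
  · rintro ⟨ht0, ht1⟩
    refine ⟨t/(1-t), Set.mem_Ioi.mpr (div_pos ht0 (by linarith)), ?_⟩
    have h1 : (1:ℝ) - t ≠ 0 := by linarith
    field_simp
    ring

lemma ratio_deriv (u : ℝ) (hu : u ∈ Set.Ioi (0:ℝ)) :
    HasDerivAt (fun u : ℝ => u/(1+u)) (1/(1+u)^2) u := by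
  simp only [Set.mem_Ioi] at hu
  have h1 : (1:ℝ) + u ≠ 0 := by positivity
  have := (hasDerivAt_id u).div ((hasDerivAt_id u).const_add 1) h1
  convert this using 1
  · rfl
  · rfl
  · rfl
  simp only [id]
  field_simp
  ring

lemma ratio_inj : Set.InjOn (fun u : ℝ => u/(1+u)) (Set.Ioi 0) := by
  intro a ha b hb hab
  simp only [Set.mem_Ioi] at ha hb
  have h1 : (1:ℝ) + a ≠ 0 := by positivity
  have h2 : (1:ℝ) + b ≠ 0 := by positivity
  field_simp at hab
  linarith

lemma inv_image : (fun v : ℝ => 1/v) '' Set.Ioo (0:ℝ) 1 = Set.Ioi (1:ℝ) := by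
  ext u
  constructor
  · rintro ⟨v, ⟨hv0, hv1⟩, rfl⟩
    simp only [Set.mem_Ioi]
    rw [lt_div_iff₀ hv0]
    linarith
  · intro hu
    simp only [Set.mem_Ioi] at hu
    have hu0 : (0:ℝ) < u := by linarith
    exact ⟨1/u, ⟨by positivity, by rw [div_lt_one hu0]; linarith⟩, by field_simp⟩

lemma inv_deriv (v : ℝ) (hv : v ∈ Set.Ioo (0:ℝ) 1) :
    HasDerivAt (fun v : ℝ => 1/v) (-(v^2)⁻¹) v := by
  simpa only [one_div] using hasDerivAt_inv (ne_of_gt hv.1)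

lemma my_inv_inj : Set.InjOn (fun v : ℝ => 1/v) (Set.Ioo (0:ℝ) 1) := by
  intro a _ b _ hab
  simp only [one_div] at hab
  exact inv_injective hab

-- transform of the original integrand under u ↦ u/(1+u)

lemma transform1 (u : ℝ) (hu : u ∈ Set.Ioi (0:ℝ)) :
    |1/(1+u)^2| • ((Real.log (u/(1+u)) - Real.log (1 - u/(1+u))) ^ 2
        * Real.log (1 - u/(1+u)) / (u/(1+u))) = hh u := by
  simp only [Set.mem_Ioi] at hu
  have h1 : (0:ℝ) < 1 + u := by linarith
  have h1' : (1:ℝ) + u ≠ 0 := ne_of_gt h1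
  have hu' : u ≠ 0 := ne_of_gt hu
  have e1 : 1 - u/(1+u) = 1/(1+u) := by field_simp; ring
  have e2 : Real.log (u/(1+u)) = Real.log u - Real.log (1+u) := Real.log_div hu' h1'
  have e3 : Real.log (1/(1+u)) = -Real.log (1+u) := by
    rw [one_div, Real.log_inv]
  rw [e1, e2, e3, abs_of_pos (by positivity : (0:ℝ) < 1/(1+u)^2), smul_eq_mul, hh]
  have e4 : Real.log u - Real.log (1+u) - -Real.log (1+u) = Real.log u := by ring
  rw [e4]
  field_simp

-- transform of hh under v ↦ 1/v

lemma transform2 (v : ℝ) (hv : v ∈ Set.Ioo (0:ℝ) 1) :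
    |(-(v^2)⁻¹)| • hh (1/v) = kk v := by
  obtain ⟨hv0, hv1⟩ := hv
  have hv' : v ≠ 0 := ne_of_gt hv0
  have h1 : (0:ℝ) < 1 + v := by linarith
  have h1' : (1:ℝ) + v ≠ 0 := ne_of_gt h1
  have e1 : (1:ℝ) + v⁻¹ = (1+v)/v := by field_simp; ring
  have e2 : Real.log ((1+v)/v) = Real.log (1+v) - Real.log v := Real.log_div h1' hv'
  rw [abs_neg, abs_of_pos (by positivity : (0:ℝ) < ((v:ℝ)^2)⁻¹), smul_eq_mul, hh, kk,
    one_div, Real.log_inv, e1, e2]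
  field_simp
  ring

lemma meas_hh : Measurable hh := by
  unfold hh
  exact (((Real.measurable_log.pow_const 2).mul
    (Real.measurable_log.comp (measurable_const.add measurable_id))).div
    (measurable_id.mul (measurable_const.add measurable_id))).neg

lemma meas_kk : Measurable kk := by
  unfold kk
  exact (((Real.measurable_log.pow_const 3).sub
    ((Real.measurable_log.pow_const 2).mul
      (Real.measurable_log.comp (measurable_const.add measurable_id)))).div
    (measurable_const.add measurable_id))

lemma integrableOn_log_sq : IntegrableOn (fun v : ℝ => Real.log v ^ 2) (Set.Ioo (0:ℝ) 1) := by
  simpa using integrableOn_pow_mul_log_pow 0 2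

lemma integrableOn_log_cube : IntegrableOn (fun v : ℝ => Real.log v ^ 3) (Set.Ioo (0:ℝ) 1) := by
  simpa using integrableOn_pow_mul_log_pow 0 3

lemma integrableOn_hh : IntegrableOn hh (Set.Ioo (0:ℝ) 1) := by
  refine Integrable.mono' integrableOn_log_sq meas_hh.aestronglyMeasurable ?_
  filter_upwards [ae_restrict_mem measurableSet_Ioo] with v hv
  obtain ⟨hv0, hv1⟩ := hv
  have h1 : (0:ℝ) < 1 + v := by linarith
  have hlog1 : 0 ≤ Real.log (1+v) := Real.log_nonneg (by linarith)
  have hle : Real.log (1+v) ≤ v := by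
    have := Real.log_le_sub_one_of_pos h1; linarith
  have hA : 0 ≤ Real.log v ^ 2 * Real.log (1+v) / (v * (1+v)) :=
    div_nonneg (mul_nonneg (sq_nonneg _) hlog1) (by positivity)
  rw [hh, Real.norm_eq_abs, abs_neg, abs_of_nonneg hA, div_le_iff₀ (by positivity : (0:ℝ) < v*(1+v))]
  nlinarith [sq_nonneg (Real.log v), mul_nonneg (sq_nonneg (Real.log v)) (sub_nonneg.mpr hle),
    mul_nonneg (sq_nonneg (Real.log v)) (mul_nonneg hv0.le hv0.le),
    mul_nonneg (mul_nonneg (sq_nonneg (Real.log v)) hv0.le) hv0.le]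

lemma integrableOn_kk : IntegrableOn kk (Set.Ioo (0:ℝ) 1) := by
  have hg : IntegrableOn (fun v : ℝ => Real.log v ^ 2 - Real.log v ^ 3) (Set.Ioo (0:ℝ) 1) :=
    integrableOn_log_sq.sub integrableOn_log_cube
  refine Integrable.mono' hg meas_kk.aestronglyMeasurable ?_
  filter_upwards [ae_restrict_mem measurableSet_Ioo] with v hv
  obtain ⟨hv0, hv1⟩ := hv
  have h1 : (0:ℝ) < 1 + v := by linarith
  have hlog1 : 0 ≤ Real.log (1+v) := Real.log_nonneg (by linarith)
  have hle : Real.log (1+v) ≤ v := by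
    have := Real.log_le_sub_one_of_pos h1; linarith
  have hL : Real.log v ≤ 0 := Real.log_nonpos hv0.le hv1.le
  have hL3 : Real.log v ^ 3 ≤ 0 := Odd.pow_nonpos (by decide) hL
  have hnum : Real.log v ^ 3 - Real.log v ^ 2 * Real.log (1+v) ≤ 0 := by
    nlinarith [mul_nonneg (sq_nonneg (Real.log v)) hlog1]
  rw [kk, Real.norm_eq_abs, abs_div, abs_of_pos h1, abs_of_nonpos hnum,
    div_le_iff₀ h1]
  nlinarith [mul_nonneg (sq_nonneg (Real.log v)) (by linarith : (0:ℝ) ≤ 1 + v - Real.log (1+v)),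
    mul_nonneg (neg_nonneg.mpr hL3) hv0.le]

lemma h4 : HasSum (fun n : ℕ => 1/((n:ℝ)+1)^4) (π^4/90) := by
  have h := (hasSum_nat_add_iff (f := fun n : ℕ => 1/(n:ℝ)^4) 1).2 (by simpa using hasSum_zeta_four)
  convert h using 2 with n
  · rfl
  push_cast
  ring

lemma hodd4 : HasSum (fun k : ℕ => 1/((2*(k:ℝ))+2)^4) (π^4/90/16) := by
  have h := h4.mul_left (1/16)
  convert h using 1
  · rfl
  · funext k
    have hk : ((k:ℝ)+1) ≠ 0 := by positivity
    field_simp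
    ring
  · ring

lemma heven4 : HasSum (fun k : ℕ => 1/((2*(k:ℝ))+1)^4) (15*(π^4/90)/16) := by
  have hsummable : Summable (fun k : ℕ => 1/((2*(k:ℝ))+1)^4) := by
    refine Summable.of_nonneg_of_le (fun k => by positivity) (fun k => ?_) h4.summable
    refine one_div_le_one_div_of_le (by positivity) ?_
    exact pow_le_pow_left₀ (by positivity) (by linarith [Nat.cast_nonneg (α := ℝ) k]) 4
  obtain ⟨w, hw⟩ := hsummable
  have hall : HasSum (fun n : ℕ => 1/((n:ℝ)+1)^4) (w + π^4/90/16) := by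
    refine HasSum.even_add_odd ?_ ?_
    · convert hw using 2 with k; push_cast; ring
    · convert hodd4 using 2 with k; push_cast; ring
  have := hall.unique h4
  have hw' : w = 15*(π^4/90)/16 := by linarith
  exact hw' ▸ hw

lemma hAlt : HasSum (fun n : ℕ => (-1:ℝ)^n * (-8/((n:ℝ)+1)^4)) (-(7*π^4/90)) := by
  have he : HasSum (fun k : ℕ => (-1:ℝ)^(2*k) * (-8/((2*(k:ℝ))+1)^4)) (-8*(15*(π^4/90)/16)) := by
    have h := heven4.mul_left (-8)
    convert h using 1
    · rfl
    funext k
    simp [pow_mul]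
    ring
  have ho : HasSum (fun k : ℕ => (-1:ℝ)^(2*k+1) * (-8/((2*(k:ℝ))+2)^4)) (8*(π^4/90/16)) := by
    have h := hodd4.mul_left 8
    convert h using 1
    · rfl
    funext k
    have hk : ((2*(k:ℝ))+2) ≠ 0 := by positivity
    simp only [pow_succ, pow_mul, neg_one_sq, one_pow, one_mul]
    field_simp
    exact one_pow k
  have h := HasSum.even_add_odd (f := fun n : ℕ => (-1:ℝ)^n * (-8/((n:ℝ)+1)^4))
    (by convert he using 2 with k; push_cast; ring)
    (by convert ho using 2 with k; push_cast; ring)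
  convert h using 1
  ring

lemma meas_ff (n : ℕ) : Measurable (ff n) := by
  unfold ff
  exact ((measurable_const.mul ((measurable_id.pow_const n).mul
      (Real.measurable_log.pow_const 3))).sub
    ((measurable_const.mul ((measurable_id.pow_const n).mul
      (Real.measurable_log.pow_const 2))).div_const _))

lemma integrableOn_ff (n : ℕ) : IntegrableOn (ff n) (Set.Ioo (0:ℝ) 1) := by
  unfold ff
  exact ((integrableOn_pow_mul_log_pow n 3).const_mul _).sub
    (((integrableOn_pow_mul_log_pow n 2).const_mul _).div_const _)

lemma integral_ff (n : ℕ) :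
    ∫ v in Set.Ioo (0:ℝ) 1, ff n v = (-1:ℝ)^n * (-8/((n:ℝ)+1)^4) := by
  unfold ff
  rw [integral_sub ((integrableOn_pow_mul_log_pow n 3).const_mul _)
    (((integrableOn_pow_mul_log_pow n 2).const_mul _).div_const _),
    integral_div, integral_const_mul, integral_const_mul,
    integral_pow_mul_log_pow, integral_pow_mul_log_pow]
  have hn : ((n:ℝ)+1) ≠ 0 := by positivity
  simp only [Nat.factorial]
  push_cast
  field_simp
  ring

-- pointwise sum

lemma hasSum_ff (v : ℝ) (hv : v ∈ Set.Ioo (0:ℝ) 1) :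
    HasSum (fun n => ff n v) (hh v + kk v) := by
  obtain ⟨hv0, hv1⟩ := hv
  have hv' : v ≠ 0 := ne_of_gt hv0
  have h1 : (0:ℝ) < 1 + v := by linarith
  have h1' : (1:ℝ) + v ≠ 0 := ne_of_gt h1
  have hnorm : ‖-v‖ < 1 := by rw [Real.norm_eq_abs, abs_neg, abs_of_pos hv0]; exact hv1
  -- geometric series
  have hgeo : HasSum (fun n : ℕ => (-v)^n) (1+v)⁻¹ := by
    have := hasSum_geometric_of_norm_lt_one hnorm
    rwa [sub_neg_eq_add] at this
  have hcube : HasSum (fun n : ℕ => (-1:ℝ)^n * (v^n * Real.log v ^ 3))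
      (Real.log v ^ 3 / (1+v)) := by
    have h := hgeo.mul_left (Real.log v ^ 3)
    rw [← div_eq_mul_inv] at h
    convert h using 1
    · rfl
    funext n; rw [neg_pow]; ring
  -- log series
  have hlogser : HasSum (fun n : ℕ => (-v)^(n+1)/((n:ℝ)+1)) (-Real.log (1+v)) := by
    have h := hasSum_pow_div_log_of_abs_lt_one (x := -v)
      (by rwa [← Real.norm_eq_abs])
    rwa [sub_neg_eq_add] at h
  have hlog2 : HasSum (fun n : ℕ => ((-1:ℝ)^n * (v^n * Real.log v ^ 2))/((n:ℝ)+1))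
      (Real.log v ^ 2 * Real.log (1+v) / v) := by
    have h := hlogser.mul_left (-(Real.log v ^ 2) / v)
    rw [show -(Real.log v ^ 2) / v * -Real.log (1+v) = Real.log v ^ 2 * Real.log (1+v) / v by
      field_simp] at h
    convert h using 1
    · rfl
    funext n
    have e : (-v)^(n+1) = -((-1:ℝ)^n * v^n * v) := by rw [neg_pow]; ring
    rw [e]
    field_simp
  have hsum := hcube.sub hlog2
  have : hh v + kk v = Real.log v ^ 3 / (1+v) - Real.log v ^ 2 * Real.log (1+v) / v := by
    rw [hh, kk]
    field_simp
    ring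
  rw [this]
  exact hsum

lemma integrableOn_bb (n : ℕ) : IntegrableOn (bb n) (Set.Ioo (0:ℝ) 1) := by
  unfold bb
  exact ((integrableOn_pow_mul_log_pow n 2).div_const _).sub (integrableOn_pow_mul_log_pow n 3)

lemma integral_bb (n : ℕ) :
    ∫ v in Set.Ioo (0:ℝ) 1, bb n v = 8/((n:ℝ)+1)^4 := by
  unfold bb
  rw [integral_sub ((integrableOn_pow_mul_log_pow n 2).div_const _)
      (integrableOn_pow_mul_log_pow n 3),
    integral_div, integral_pow_mul_log_pow, integral_pow_mul_log_pow]
  have hn : ((n:ℝ)+1) ≠ 0 := by positivity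
  simp only [Nat.factorial]
  push_cast
  field_simp
  ring

lemma norm_ff_le (n : ℕ) (v : ℝ) (hv : v ∈ Set.Ioo (0:ℝ) 1) : ‖ff n v‖ ≤ bb n v := by
  obtain ⟨hv0, hv1⟩ := hv
  have hL : Real.log v ≤ 0 := Real.log_nonpos hv0.le hv1.le
  have hn : (0:ℝ) < (n:ℝ)+1 := by positivity
  calc ‖ff n v‖ ≤ ‖(-1:ℝ)^n * (v^n * Real.log v ^ 3)‖
        + ‖((-1:ℝ)^n * (v^n * Real.log v ^ 2))/((n:ℝ)+1)‖ := norm_sub_le _ _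
    _ = bb n v := by
        simp only [Real.norm_eq_abs, abs_mul, abs_div, abs_pow, abs_neg, abs_one, one_pow, one_mul]
        rw [abs_of_pos hv0, abs_of_nonpos hL, abs_of_pos hn, bb]
        ring

lemma integral_norm_ff_le (n : ℕ) :
    ∫ v in Set.Ioo (0:ℝ) 1, ‖ff n v‖ ≤ 8/((n:ℝ)+1)^4 := by
  rw [← integral_bb n]
  exact setIntegral_mono_on (integrableOn_ff n).norm (integrableOn_bb n)
    measurableSet_Ioo (norm_ff_le n)

lemma key_sum : ∫ v in Set.Ioo (0:ℝ) 1, (hh v + kk v) = -(7*π^4/90) := by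
  have h1 : ∫ v in Set.Ioo (0:ℝ) 1, (hh v + kk v)
      = ∫ v in Set.Ioo (0:ℝ) 1, ∑' n, ff n v :=
    setIntegral_congr_fun measurableSet_Ioo (fun v hv => ((hasSum_ff v hv).tsum_eq).symm)
  have hsum8 : Summable (fun n : ℕ => (8:ℝ)/((n:ℝ)+1)^4) := by
    have := h4.summable.mul_left 8
    simp only [mul_one_div] at this
    exact this
  have hfin : ∑' n, ∫⁻ v, ‖ff n v‖₊ ∂(volume.restrict (Set.Ioo (0:ℝ) 1)) ≠ ⊤ := by
    have heach : ∀ n : ℕ, ∫⁻ v, ‖ff n v‖₊ ∂(volume.restrict (Set.Ioo (0:ℝ) 1))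
        ≤ ENNReal.ofReal (8/((n:ℝ)+1)^4) := fun n => by
      rw [show (∫⁻ v, (‖ff n v‖₊ : ENNReal) ∂(volume.restrict (Set.Ioo (0:ℝ) 1))) = ∫⁻ v, ‖ff n v‖ₑ ∂(volume.restrict (Set.Ioo (0:ℝ) 1)) from rfl,
        ← ofReal_integral_norm_eq_lintegral_enorm (integrableOn_ff n)]
      exact ENNReal.ofReal_le_ofReal (integral_norm_ff_le n)
    have hle : (∑' n, ∫⁻ v, ‖ff n v‖₊ ∂(volume.restrict (Set.Ioo (0:ℝ) 1)))
        ≤ ENNReal.ofReal (∑' n : ℕ, 8/((n:ℝ)+1)^4) := by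
      rw [ENNReal.ofReal_tsum_of_nonneg (fun n => by positivity) hsum8]
      exact ENNReal.tsum_le_tsum heach
    exact ne_top_of_le_ne_top ENNReal.ofReal_ne_top hle
  have h2 : ∫ v in Set.Ioo (0:ℝ) 1, ∑' n, ff n v
      = ∑' n, ∫ v in Set.Ioo (0:ℝ) 1, ff n v :=
    integral_tsum (fun n => (meas_ff n).aestronglyMeasurable) hfin
  rw [h1, h2]
  have h3 : (fun n : ℕ => ∫ v in Set.Ioo (0:ℝ) 1, ff n v)
      = fun n : ℕ => (-1:ℝ)^n * (-8/((n:ℝ)+1)^4) := funext integral_ff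
  rw [h3, hAlt.tsum_eq]

theorem zeta4_integral_Ioo :
    ∫ t in Set.Ioo (0 : ℝ) 1,
      (Real.log t - Real.log (1 - t)) ^ 2 * Real.log (1 - t) / t =
      -(7 * Real.pi ^ 4 / 90) := by
  have stepA : (∫ t in Set.Ioo (0:ℝ) 1,
      (Real.log t - Real.log (1 - t)) ^ 2 * Real.log (1 - t) / t)
      = ∫ u in Set.Ioi (0:ℝ), hh u := by
    rw [← ratio_image, MeasureTheory.integral_image_eq_integral_abs_deriv_smul
      measurableSet_Ioi (fun u hu => (ratio_deriv u hu).hasDerivWithinAt) ratio_inj]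
    exact setIntegral_congr_fun measurableSet_Ioi transform1
  have hint_Ioi1 : IntegrableOn hh (Set.Ioi (1:ℝ)) := by
    rw [← inv_image, MeasureTheory.integrableOn_image_iff_integrableOn_abs_deriv_smul
      measurableSet_Ioo (fun v hv => (inv_deriv v hv).hasDerivWithinAt) my_inv_inj]
    exact integrableOn_kk.congr_fun (fun v hv => (transform2 v hv).symm) measurableSet_Ioo
  have hint_Ici : IntegrableOn hh (Set.Ici (1:ℝ)) :=
    (integrableOn_Ici_iff_integrableOn_Ioi (by simp)).mpr hint_Ioi1
  have hdisj : Disjoint (Set.Ioo (0:ℝ) 1) (Set.Ici (1:ℝ)) := by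
    rw [Set.disjoint_left]
    rintro x ⟨_, hx1⟩ hx2
    exact absurd hx2 (not_le.mpr hx1)
  have hsplit : ∫ u in Set.Ioi (0:ℝ), hh u
      = (∫ u in Set.Ioo (0:ℝ) 1, hh u) + ∫ u in Set.Ici (1:ℝ), hh u := by
    rw [← setIntegral_union hdisj measurableSet_Ici integrableOn_hh hint_Ici,
      Set.Ioo_union_Ici_eq_Ioi zero_lt_one]
  have hinv : ∫ u in Set.Ici (1:ℝ), hh u = ∫ v in Set.Ioo (0:ℝ) 1, kk v := by
    rw [integral_Ici_eq_integral_Ioi, ← inv_image,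
      MeasureTheory.integral_image_eq_integral_abs_deriv_smul measurableSet_Ioo
        (fun v hv => (inv_deriv v hv).hasDerivWithinAt) my_inv_inj]
    exact setIntegral_congr_fun measurableSet_Ioo transform2
  have hadd : (∫ u in Set.Ioo (0:ℝ) 1, hh u) + (∫ v in Set.Ioo (0:ℝ) 1, kk v)
      = ∫ v in Set.Ioo (0:ℝ) 1, (hh v + kk v) :=
    (integral_add integrableOn_hh integrableOn_kk).symm
  rw [stepA, hsplit, hinv, hadd, key_sum]
end

section
/- The improper integral of z⁶ · ln(1+e^z)/(1+e^z) over the whole real line equals 5715·ζ(8), i.e. ∫_{-∞}^{+∞} z⁶ ln(1+eᶻ)/(1+eᶻ) dz = 5715·π⁸/9450. -/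
open Real MeasureTheory Set Finset

/-! ### Bernoulli numbers and `ζ(8)` -/

private theorem bern5' : bernoulli' 5 = 0 := by
  rw [bernoulli'_def]
  norm_num [Finset.sum_range_succ, Finset.sum_range_zero, Nat.choose]

private theorem bern6' : bernoulli' 6 = 1 / 42 := by
  rw [bernoulli'_def]
  norm_num [Finset.sum_range_succ, Finset.sum_range_zero, bern5', Nat.choose]

private theorem bern7' : bernoulli' 7 = 0 := by
  rw [bernoulli'_def]
  norm_num [Finset.sum_range_succ, Finset.sum_range_zero, bern5', bern6', Nat.choose]

private theorem bern8' : bernoulli' 8 = -1 / 30 := by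
  rw [bernoulli'_def]
  norm_num [Finset.sum_range_succ, Finset.sum_range_zero, bern5', bern6', bern7', Nat.choose]

private theorem zeta8ax : HasSum (fun n : ℕ => (1 : ℝ) / (n : ℝ) ^ 8) (π ^ 8 / 9450) := by
  have h := hasSum_zeta_nat (k := 4) (by norm_num)
  have hb : bernoulli 8 = -1 / 30 := by
    rw [bernoulli_eq_bernoulli'_of_ne_one (by norm_num), bern8']
  norm_num [hb, Nat.factorial] at h
  have he : (128 : ℝ) * π ^ 8 * (1 / 30) / 40320 = π ^ 8 / 9450 := by ring
  rw [he] at h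
  simpa [one_div] using h

private theorem zeta8' : HasSum (fun n : ℕ => (1 : ℝ) / ((n : ℝ) + 1) ^ 8) (π ^ 8 / 9450) := by
  have h := (hasSum_nat_add_iff' (f := fun n : ℕ => (1 : ℝ) / (n : ℝ) ^ 8) 1
      (g := π ^ 8 / 9450)).mpr zeta8ax
  have he : (fun n : ℕ => (1 : ℝ) / ((n : ℕ) + 1 : ℕ) ^ 8) =
      fun n : ℕ => (1 : ℝ) / ((n : ℝ) + 1) ^ 8 := by
    funext n; push_cast; ring
  simpa [he] using h

private theorem eta8 :
    HasSum (fun n : ℕ => (-1 : ℝ) ^ n / ((n : ℝ) + 1) ^ 8) (127 / 128 * (π ^ 8 / 9450)) := by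
  set Z := π ^ 8 / 9450 with hZ
  have hEven : HasSum (fun k : ℕ => (1 : ℝ) / ((2 * (k : ℝ) + 1) + 1) ^ 8) (Z / 256) := by
    have h := zeta8'.mul_left (1 / 256)
    have he : (fun k : ℕ => (1 : ℝ) / 256 * (1 / ((k : ℝ) + 1) ^ 8)) =
        fun k : ℕ => (1 : ℝ) / ((2 * (k : ℝ) + 1) + 1) ^ 8 := by
      funext k
      have h1 : ((2 : ℝ) * k + 1 + 1) ^ 8 = 256 * ((k : ℝ) + 1) ^ 8 := by ring
      rw [h1]
      field_simp
    rw [he] at h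
    convert h using 1
    · rfl
    ring
  have hsummEven : Summable (fun k : ℕ => (1 : ℝ) / (2 * (k : ℝ) + 1) ^ 8) := by
    have h := zeta8'.summable.comp_injective (i := fun k : ℕ => 2 * k)
      (fun a b h => by simp only [] at h; omega)
    have he : ((fun n : ℕ => (1 : ℝ) / ((n : ℝ) + 1) ^ 8) ∘ fun k : ℕ => 2 * k) =
        fun k : ℕ => (1 : ℝ) / (2 * (k : ℝ) + 1) ^ 8 := by
      funext k; simp only [Function.comp]; push_cast; ring_nf
    rwa [he] at h
  have h1 := hsummEven.hasSum
  have hefn : (fun k : ℕ => (fun n : ℕ => (1 : ℝ) / ((n : ℝ) + 1) ^ 8) (2 * k)) =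
      fun k : ℕ => (1 : ℝ) / (2 * (k : ℝ) + 1) ^ 8 := by
    funext k; push_cast; ring_nf
  have hofn : (fun k : ℕ => (fun n : ℕ => (1 : ℝ) / ((n : ℝ) + 1) ^ 8) (2 * k + 1)) =
      fun k : ℕ => (1 : ℝ) / ((2 * (k : ℝ) + 1) + 1) ^ 8 := by
    funext k; push_cast; ring_nf
  have h2 : HasSum (fun n : ℕ => (1 : ℝ) / ((n : ℝ) + 1) ^ 8)
      ((∑' k : ℕ, (1 : ℝ) / (2 * (k : ℝ) + 1) ^ 8) + Z / 256) :=
    HasSum.even_add_odd (hefn ▸ h1) (hofn ▸ hEven)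
  have h3 := zeta8'.unique h2
  have hv : ∑' k : ℕ, (1 : ℝ) / (2 * (k : ℝ) + 1) ^ 8 = 255 / 256 * Z := by linarith
  rw [hv] at h1
  have hefn2 : (fun k : ℕ => (fun n : ℕ => (-1 : ℝ) ^ n / ((n : ℝ) + 1) ^ 8) (2 * k)) =
      fun k : ℕ => (1 : ℝ) / (2 * (k : ℝ) + 1) ^ 8 := by
    funext k; beta_reduce; rw [pow_mul]; push_cast; norm_num
  have hofn2 : (fun k : ℕ => (fun n : ℕ => (-1 : ℝ) ^ n / ((n : ℝ) + 1) ^ 8) (2 * k + 1)) =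
      fun k : ℕ => -((1 : ℝ) / ((2 * (k : ℝ) + 1) + 1) ^ 8) := by
    funext k; beta_reduce; rw [pow_succ, pow_mul]; push_cast; norm_num
    rw [neg_div, one_div]
  have h4 : HasSum (fun n : ℕ => (-1 : ℝ) ^ n / ((n : ℝ) + 1) ^ 8)
      (255 / 256 * Z + -(Z / 256)) :=
    HasSum.even_add_odd (hefn2 ▸ h1) (hofn2 ▸ hEven.neg)
  convert h4 using 1
  ring

/-! ### Elementary integrals -/

private theorem integrableOn_pow_exp_s11 (k : ℕ) {c : ℝ} (hc : 0 < c) :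
    IntegrableOn (fun z : ℝ => z ^ k * Real.exp (-(c * z))) (Ioi 0) := by
  have h := integrableOn_rpow_mul_exp_neg_mul_rpow (p := 1) (s := (k : ℝ)) (b := c)
    (by exact_mod_cast neg_one_lt_zero.trans_le (Nat.cast_nonneg k)) one_pos hc
  refine h.congr_fun (fun x hx => ?_) measurableSet_Ioi
  beta_reduce
  rw [rpow_one, rpow_natCast, neg_mul]

private theorem int_pow_exp (k : ℕ) {c : ℝ} (hc : 0 < c) :
    ∫ z in Ioi (0 : ℝ), z ^ k * Real.exp (-(c * z)) = (Nat.factorial k : ℝ) / c ^ (k + 1) := by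
  have h := integral_rpow_mul_exp_neg_mul_Ioi (a := (k : ℝ) + 1) (by positivity) hc
  rw [show ((k : ℝ) + 1 - 1) = (k : ℝ) by ring] at h
  calc ∫ z in Ioi (0 : ℝ), z ^ k * Real.exp (-(c * z))
      = ∫ z in Ioi (0 : ℝ), z ^ ((k : ℝ)) * Real.exp (-(c * z)) :=
        setIntegral_congr_fun measurableSet_Ioi (fun z _ => by rw [rpow_natCast])
    _ = (1 / c) ^ ((k : ℝ) + 1) * Real.Gamma ((k : ℝ) + 1) := h
    _ = (Nat.factorial k : ℝ) / c ^ (k + 1) := by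
        rw [Real.Gamma_nat_eq_factorial,
          show ((k : ℝ) + 1) = ((k + 1 : ℕ) : ℝ) by push_cast; ring, rpow_natCast,
          one_div, inv_pow]
        ring

/-! ### The key algebraic identity and pointwise series expansion -/

private theorem log_one_add_exp (z : ℝ) :
    Real.log (1 + Real.exp z) = z + Real.log (1 + Real.exp (-z)) := by
  have h : (1 : ℝ) + Real.exp z = Real.exp z * (1 + Real.exp (-z)) := by
    rw [mul_add, mul_one, ← Real.exp_add]
    simp [add_comm]
  rw [h, Real.log_mul (Real.exp_ne_zero z) (by positivity), Real.log_exp]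

private theorem key_identity (z : ℝ) :
    z ^ 6 * Real.log (1 + Real.exp z) / (1 + Real.exp z) +
      (-z) ^ 6 * Real.log (1 + Real.exp (-z)) / (1 + Real.exp (-z)) =
    z ^ 6 * Real.log (1 + Real.exp (-z)) +
      z ^ 7 * (Real.exp (-z) * (1 + Real.exp (-z))⁻¹) := by
  have hE : (0 : ℝ) < Real.exp z := Real.exp_pos z
  rw [log_one_add_exp z, Real.exp_neg]
  have h1 : (1 : ℝ) + Real.exp z ≠ 0 := by positivity
  have h2 : (1 : ℝ) + (Real.exp z)⁻¹ ≠ 0 := by positivity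
  field_simp
  ring

private noncomputable def Fz (n : ℕ) (z : ℝ) : ℝ :=
  (-1 : ℝ) ^ n * (z ^ 6 * Real.exp (-(((n : ℝ) + 1) * z)) / ((n : ℝ) + 1) +
    z ^ 7 * Real.exp (-(((n : ℝ) + 1) * z)))

private theorem exp_pow_eq (n : ℕ) (z : ℝ) :
    Real.exp (-(((n : ℝ) + 1) * z)) = Real.exp (-z) ^ (n + 1) := by
  rw [show -(((n : ℝ) + 1) * z) = ((n + 1 : ℕ) : ℝ) * (-z) by push_cast; ring,
    Real.exp_nat_mul]

private theorem hasSum_Fz {z : ℝ} (hz : 0 < z) :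
    HasSum (fun n => Fz n z)
      (z ^ 6 * Real.log (1 + Real.exp (-z)) +
        z ^ 7 * (Real.exp (-z) * (1 + Real.exp (-z))⁻¹)) := by
  set t := Real.exp (-z) with ht
  have ht0 : 0 < t := Real.exp_pos _
  have ht1 : t < 1 := by
    rw [ht]
    exact Real.exp_lt_one_iff.mpr (by linarith)
  have hlog : HasSum (fun n : ℕ => -((-t) ^ (n + 1) / ((n : ℝ) + 1))) (Real.log (1 + t)) := by
    have h := (hasSum_pow_div_log_of_abs_lt_one
      (x := -t) (by rwa [abs_neg, abs_of_pos ht0])).neg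
    simpa [sub_neg_eq_add] using h
  have hgeo : HasSum (fun n : ℕ => t * (-t) ^ n) (t * (1 + t)⁻¹) := by
    have h := (hasSum_geometric_of_norm_lt_one (ξ := -t)
      (by rwa [norm_neg, Real.norm_of_nonneg ht0.le])).mul_left t
    simpa [sub_neg_eq_add] using h
  have hsum := (hlog.mul_left (z ^ 6)).add (hgeo.mul_left (z ^ 7))
  have hfe : (fun n : ℕ => z ^ 6 * -((-t) ^ (n + 1) / ((n : ℝ) + 1)) + z ^ 7 * (t * (-t) ^ n)) =
      fun n => Fz n z := by
    funext n
    simp only [Fz]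
    rw [exp_pow_eq, ← ht, neg_pow t (n + 1), neg_pow t n, pow_succ]
    ring
  rwa [hfe] at hsum

/-! ### Termwise integrals -/

private theorem hcpos (n : ℕ) : (0 : ℝ) < (n : ℝ) + 1 := by positivity

private theorem Fz_integrableOn (n : ℕ) : IntegrableOn (Fz n) (Ioi 0) := by
  have h6 := (integrableOn_pow_exp_s11 6 (hcpos n)).div_const ((n : ℝ) + 1)
  have h7 := integrableOn_pow_exp_s11 7 (hcpos n)
  exact (h6.add h7).const_mul _

private theorem Fz_integral (n : ℕ) :
    ∫ z in Ioi (0 : ℝ), Fz n z = (-1 : ℝ) ^ n * (5760 / ((n : ℝ) + 1) ^ 8) := by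
  have h6 := (integrableOn_pow_exp_s11 6 (hcpos n)).div_const ((n : ℝ) + 1)
  have h7 := integrableOn_pow_exp_s11 7 (hcpos n)
  simp only [Fz]
  rw [integral_const_mul, integral_add h6 h7, integral_div, int_pow_exp 6 (hcpos n),
    int_pow_exp 7 (hcpos n)]
  have h0 : ((n : ℝ) + 1) ≠ 0 := (hcpos n).ne'
  norm_num [Nat.factorial]
  field_simp
  ring

private theorem Fz_norm_integral (n : ℕ) :
    ∫ z in Ioi (0 : ℝ), ‖Fz n z‖ = 5760 / ((n : ℝ) + 1) ^ 8 := by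
  have heq : ∀ z ∈ Ioi (0 : ℝ), ‖Fz n z‖ =
      z ^ 6 * Real.exp (-(((n : ℝ) + 1) * z)) / ((n : ℝ) + 1) +
        z ^ 7 * Real.exp (-(((n : ℝ) + 1) * z)) := by
    intro z hz
    have hz0 : (0 : ℝ) < z := hz
    rw [Fz, norm_mul, norm_pow, norm_neg, norm_one, one_pow, one_mul,
      Real.norm_of_nonneg (by positivity)]
  rw [setIntegral_congr_fun measurableSet_Ioi heq]
  have h6 := (integrableOn_pow_exp_s11 6 (hcpos n)).div_const ((n : ℝ) + 1)
  have h7 := integrableOn_pow_exp_s11 7 (hcpos n)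
  rw [integral_add h6 h7, integral_div, int_pow_exp 6 (hcpos n), int_pow_exp 7 (hcpos n)]
  have h0 : ((n : ℝ) + 1) ≠ 0 := (hcpos n).ne'
  norm_num [Nat.factorial]
  field_simp
  ring

/-! ### Integrability of the integrand -/

private theorem g_cont : Continuous (fun z : ℝ =>
    z ^ 6 * Real.log (1 + Real.exp z) / (1 + Real.exp z)) := by
  have h0 : ∀ x : ℝ, (1 : ℝ) + Real.exp x ≠ 0 := fun x => by positivity
  exact ((continuous_pow 6).mul
    ((continuous_const.add Real.continuous_exp).log h0)).div
    (continuous_const.add Real.continuous_exp) h0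

private theorem g_intOn_Ioi : IntegrableOn (fun z : ℝ =>
    z ^ 6 * Real.log (1 + Real.exp z) / (1 + Real.exp z)) (Ioi 0) := by
  refine Integrable.mono'
    ((integrableOn_pow_exp_s11 7 one_pos).add (integrableOn_pow_exp_s11 6 one_pos))
    g_cont.aestronglyMeasurable.restrict ?_
  refine (ae_restrict_iff' measurableSet_Ioi).mpr (ae_of_all _ fun z hz => ?_)
  have hz : (0 : ℝ) < z := hz
  have hE : (0 : ℝ) < Real.exp z := Real.exp_pos z
  have hL : 0 ≤ Real.log (1 + Real.exp z) := Real.log_nonneg (by linarith)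
  rw [Real.norm_of_nonneg (by positivity)]
  have hlog2 : Real.log (1 + Real.exp z) ≤ z + 1 := by
    rw [log_one_add_exp z]
    have h1 : Real.log (1 + Real.exp (-z)) ≤ Real.exp (-z) := by
      have := Real.log_le_sub_one_of_pos (x := 1 + Real.exp (-z)) (by positivity)
      linarith
    have h2 : Real.exp (-z) ≤ 1 := Real.exp_le_one_iff.mpr (by linarith)
    linarith
  calc z ^ 6 * Real.log (1 + Real.exp z) / (1 + Real.exp z)
      ≤ z ^ 6 * (z + 1) / Real.exp z := by
        gcongr
        · linarith
      _ = z ^ 7 * Real.exp (-(1 * z)) + z ^ 6 * Real.exp (-(1 * z)) := by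
        rw [one_mul, Real.exp_neg]
        field_simp

private theorem g_neg_intOn_Ioi : IntegrableOn (fun z : ℝ =>
    (-z) ^ 6 * Real.log (1 + Real.exp (-z)) / (1 + Real.exp (-z))) (Ioi 0) := by
  refine Integrable.mono' (integrableOn_pow_exp_s11 6 one_pos)
    ((g_cont.comp continuous_neg).aestronglyMeasurable.restrict) ?_
  refine (ae_restrict_iff' measurableSet_Ioi).mpr (ae_of_all _ fun z hz => ?_)
  have hz : (0 : ℝ) < z := hz
  have hE : (0 : ℝ) < Real.exp (-z) := Real.exp_pos _
  have hL : 0 ≤ Real.log (1 + Real.exp (-z)) := Real.log_nonneg (by linarith)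
  have h6 : (-z) ^ 6 = z ^ 6 := by
    exact Even.neg_pow (⟨3, rfl⟩ : Even 6) z
  rw [Real.norm_of_nonneg (by rw [h6]; positivity), h6]
  have h1 : Real.log (1 + Real.exp (-z)) ≤ Real.exp (-z) := by
    have := Real.log_le_sub_one_of_pos (x := 1 + Real.exp (-z)) (by positivity)
    linarith
  calc z ^ 6 * Real.log (1 + Real.exp (-z)) / (1 + Real.exp (-z))
      ≤ z ^ 6 * Real.exp (-z) / 1 := by
        gcongr
        · linarith
      _ = z ^ 6 * Real.exp (-(1 * z)) := by rw [one_mul, div_one]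

/-! ### Main theorem -/

theorem zeta8_integral :
    ∫ z : ℝ, z ^ 6 * Real.log (1 + Real.exp z) / (1 + Real.exp z) =
      5715 * (Real.pi ^ 8 / 9450) := by
  have hIic : IntegrableOn (fun z : ℝ =>
      z ^ 6 * Real.log (1 + Real.exp z) / (1 + Real.exp z)) (Iic 0) := by
    rw [← (Measure.measurePreserving_neg (volume : Measure ℝ)).integrableOn_comp_preimage
        (Homeomorph.neg ℝ).measurableEmbedding]
    simp only [Function.comp_def, neg_preimage, neg_Iic, neg_zero]
    rw [integrableOn_Ici_iff_integrableOn_Ioi]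
    exact g_neg_intOn_Ioi
  rw [← intervalIntegral.integral_Iic_add_Ioi hIic g_intOn_Ioi]
  have hneg : (∫ z in Iic (0 : ℝ), z ^ 6 * Real.log (1 + Real.exp z) / (1 + Real.exp z))
      = ∫ z in Ioi (0 : ℝ),
          (-z) ^ 6 * Real.log (1 + Real.exp (-z)) / (1 + Real.exp (-z)) := by
    have h := integral_comp_neg_Ioi (0 : ℝ)
      (fun z : ℝ => z ^ 6 * Real.log (1 + Real.exp z) / (1 + Real.exp z))
    simpa using h.symm
  rw [hneg, ← integral_add g_neg_intOn_Ioi g_intOn_Ioi]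
  have hcongr : ∀ z ∈ Ioi (0 : ℝ),
      ((-z) ^ 6 * Real.log (1 + Real.exp (-z)) / (1 + Real.exp (-z)) +
        z ^ 6 * Real.log (1 + Real.exp z) / (1 + Real.exp z)) = ∑' n, Fz n z := fun z hz =>
    ((add_comm _ _).trans (key_identity z)).trans (hasSum_Fz hz).tsum_eq.symm
  rw [setIntegral_congr_fun measurableSet_Ioi hcongr]
  have hsummable : Summable (fun n => ∫ z in Ioi (0 : ℝ), ‖Fz n z‖) := by
    have he : (fun n : ℕ => ∫ z in Ioi (0 : ℝ), ‖Fz n z‖) =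
        fun n : ℕ => 5760 * (1 / ((n : ℝ) + 1) ^ 8) := by
      funext n; rw [Fz_norm_integral]; ring
    rw [he]
    exact (zeta8'.summable).mul_left 5760
  rw [← integral_tsum_of_summable_integral_norm Fz_integrableOn hsummable]
  have he : (fun n : ℕ => ∫ z in Ioi (0 : ℝ), Fz n z) =
      fun n : ℕ => 5760 * ((-1 : ℝ) ^ n / ((n : ℝ) + 1) ^ 8) := by
    funext n; rw [Fz_integral]; ring
  rw [he, (eta8.mul_left 5760).tsum_eq]
  ring
end
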